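/- In the algebraic model on R^{2n} with α_i defined as before and 2-form ω = Σ_{j=1}^n e^{n+j} ∧ e^j, the interior product identity Σ_{q=1}^n e^q ∧ (e_{n+q} ⌟ α_i) = (i+1) α_{i+1} holds for every 0 ≤ i ≤ n−1 (and equals 0 for i = n). -/

import Mathlib

set_option synthInstance.maxHeartbeats 1000000
/-- The model for the dual basis covector `e^j` of `ℝ^m`, as a degree-one element of the
exterior algebra of the dual space. -/
noncomputable def eD (m : ℕ) (j : Fin m) :
    ExteriorAlgebra ℝ (Module.Dual ℝ (Fin m → ℝ)) :=
  ExteriorAlgebra.ι ℝ ((Pi.basisFun ℝ (Fin m)).coord j)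

/-- The Griffiths `n`-form
`α_i = (1/(i!(n-i)!)) ∑_{σ ∈ S_n} sgn(σ) e^{σ(1)} ∧ ⋯ ∧ e^{σ(i)} ∧ e^{n+σ(i+1)} ∧ ⋯ ∧ e^{n+σ(n)}`
on the `2n`-dimensional space `ℝ^{2n}` with basis `e_1, …, e_{2n}` (indexed here by `Fin (n+n)`,
the first block being `e_1, …, e_n` and the second block `e_{n+1}, …, e_{2n}`). -/
noncomputable def alphaG (n i : ℕ) : ExteriorAlgebra ℝ (Module.Dual ℝ (Fin (n + n) → ℝ)) :=
  ((i.factorial * (n - i).factorial : ℝ))⁻¹ •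
    ∑ σ : Equiv.Perm (Fin n), (((Equiv.Perm.sign σ : ℤ) : ℝ)) •
      (List.ofFn (fun k : Fin n =>
        if (k : ℕ) < i then eD (n + n) (Fin.castAdd n (σ k))
        else eD (n + n) (Fin.natAdd n (σ k)))).prod

/-- Interior product (contraction) by the basis vector `e_p` on the exterior algebra of forms. -/
noncomputable def iotaV (m : ℕ) (p : Fin m) :
    ExteriorAlgebra ℝ (Module.Dual ℝ (Fin m → ℝ)) →ₗ[ℝ]
      ExteriorAlgebra ℝ (Module.Dual ℝ (Fin m → ℝ)) :=
  CliffordAlgebra.contractLeft (Module.Dual.eval ℝ (Fin m → ℝ) (Pi.single p 1))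

set_option maxHeartbeats 1000000

open ExteriorAlgebra

section GeneralLemmas

variable {V : Type*} [AddCommGroup V] [Module ℝ V]

lemma ιMulti_cons {N : ℕ} (a : V) (h : Fin N → V) :
    ExteriorAlgebra.ι ℝ a * ιMulti ℝ N h = ιMulti ℝ (N + 1) (Fin.cons a h) := by
  rw [ιMulti_succ_apply, Fin.cons_zero]
  congr 1

lemma contract_ιMulti (f : Module.Dual ℝ V) :
    ∀ (N : ℕ) (v : Fin (N + 1) → V),
    CliffordAlgebra.contractLeft (Q := (0 : QuadraticForm ℝ V)) f (ιMulti ℝ (N + 1) v) =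
      ∑ j : Fin (N + 1), ((-1 : ℝ) ^ (j : ℕ) * f (v j)) •
        ιMulti ℝ N (v ∘ j.succAbove) := by
  intro N
  induction N with
  | zero =>
    intro v
    rw [ιMulti_succ_apply, CliffordAlgebra.contractLeft_ι_mul]
    simp [Matrix.vecTail]
  | succ N ih =>
    intro v
    rw [ιMulti_succ_apply, CliffordAlgebra.contractLeft_ι_mul]
    have hvt : Matrix.vecTail v = v ∘ Fin.succ := rfl
    rw [hvt, ih (v ∘ Fin.succ)]
    rw [Finset.mul_sum]
    have step : ∀ j : Fin (N + 1),
        (CliffordAlgebra.ι (0 : QuadraticForm ℝ V)) (v 0) *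
            (((-1 : ℝ) ^ (j : ℕ) * f ((v ∘ Fin.succ) j)) •
              ιMulti ℝ N ((v ∘ Fin.succ) ∘ j.succAbove)) =
          ((-1 : ℝ) ^ (j : ℕ) * f (v j.succ)) •
            ιMulti ℝ (N + 1) (v ∘ (j.succ).succAbove) := by
      intro j
      rw [mul_smul_comm]
      have : (CliffordAlgebra.ι (0 : QuadraticForm ℝ V)) (v 0) = ExteriorAlgebra.ι ℝ (v 0) := rfl
      rw [this, ιMulti_cons]
      have hfun : Fin.cons (v 0) ((v ∘ Fin.succ) ∘ j.succAbove) = v ∘ (j.succ).succAbove := by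
        funext k
        refine Fin.cases ?_ (fun m => ?_) k
        · simp
        · simp [Fin.succ_succAbove_succ]
      rw [hfun]
      rfl
    simp only [step]
    conv_rhs => rw [Fin.sum_univ_succ]
    rw [sub_eq_add_neg]
    congr 1
    · simp
    · rw [← Finset.sum_neg_distrib]
      refine Finset.sum_congr rfl fun j _ => ?_
      rw [← neg_smul]
      congr 1
      rw [Fin.val_succ, pow_succ]
      ring

end GeneralLemmas

noncomputable def cD (n : ℕ) (q : Fin n) : Module.Dual ℝ (Fin (n + n) → ℝ) :=
  (Pi.basisFun ℝ (Fin (n + n))).coord (Fin.castAdd n q)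

noncomputable def nDual (n : ℕ) (q : Fin n) : Module.Dual ℝ (Fin (n + n) → ℝ) :=
  (Pi.basisFun ℝ (Fin (n + n))).coord (Fin.natAdd n q)

noncomputable def wG (n i : ℕ) (σ : Equiv.Perm (Fin n)) :
    Fin n → Module.Dual ℝ (Fin (n + n) → ℝ) :=
  fun k => if (k : ℕ) < i then cD n (σ k) else nDual n (σ k)

noncomputable def wG' (n i : ℕ) (j : Fin n) (σ : Equiv.Perm (Fin n)) :
    Fin n → Module.Dual ℝ (Fin (n + n) → ℝ) :=
  fun k => if ((k : ℕ) < i ∨ k = j) then cD n (σ k) else nDual n (σ k)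

lemma eval_cD (n : ℕ) (p q : Fin n) :
    Module.Dual.eval ℝ (Fin (n + n) → ℝ) (Pi.single (Fin.natAdd n p) 1) (cD n q) = 0 := by
  simp only [cD, Module.Dual.eval_apply, Module.Basis.coord_apply, Pi.basisFun_repr,
    Pi.single_apply]
  rw [if_neg]
  simp only [Fin.ext_iff, Fin.coe_castAdd, Fin.coe_natAdd]
  have := q.isLt
  omega

lemma eval_nD (n : ℕ) (p q : Fin n) :
    Module.Dual.eval ℝ (Fin (n + n) → ℝ) (Pi.single (Fin.natAdd n p) 1) (nDual n q) =
      if q = p then (1 : ℝ) else 0 := by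
  simp only [nDual, Module.Dual.eval_apply, Module.Basis.coord_apply, Pi.basisFun_repr,
    Pi.single_apply]
  have h : ((Fin.natAdd n q : Fin (n + n)) = Fin.natAdd n p) ↔ q = p := by
    simp only [Fin.ext_iff, Fin.coe_natAdd]
    omega
  have h2 : ((q.addNat n : Fin (n + n)) = p.addNat n) ↔ q = p := by
    simp only [Fin.ext_iff, Fin.coe_addNat]
    omega
  simp [h2]

lemma alphaG_eq' (n i : ℕ) :
    (∑ σ : Equiv.Perm (Fin n), (((Equiv.Perm.sign σ : ℤ) : ℝ)) •
      (List.ofFn (fun k : Fin n =>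
        if (k : ℕ) < i then ExteriorAlgebra.ι ℝ (cD n (σ k))
        else ExteriorAlgebra.ι ℝ (nDual n (σ k)))).prod) =
    ∑ σ : Equiv.Perm (Fin n), (((Equiv.Perm.sign σ : ℤ) : ℝ)) • ιMulti ℝ n (wG n i σ) := by
  refine Finset.sum_congr rfl fun σ _ => ?_
  congr 1
  rw [ιMulti_apply]
  refine congrArg List.prod ?_
  rw [List.ofFn_inj]
  funext k
  simp only [wG, apply_ite (ExteriorAlgebra.ι ℝ)]

lemma alphaG_eq (n i : ℕ) :
    alphaG n i = ((i.factorial * (n - i).factorial : ℝ))⁻¹ •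
      ∑ σ : Equiv.Perm (Fin n), (((Equiv.Perm.sign σ : ℤ) : ℝ)) • ιMulti ℝ n (wG n i σ) := by
  rw [alphaG]
  congr 1
  rw [← alphaG_eq' n i]
  simp only [eD, cD, nDual]

lemma lemA (N i : ℕ) (σ : Equiv.Perm (Fin (N + 1))) :
    (∑ q : Fin (N + 1), ExteriorAlgebra.ι ℝ (cD (N + 1) q) *
      CliffordAlgebra.contractLeft (Q := 0)
        (Module.Dual.eval ℝ (Fin ((N + 1) + (N + 1)) → ℝ)
          (Pi.single (Fin.natAdd (N + 1) q) 1))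
        (ιMulti ℝ (N + 1) (wG (N + 1) i σ))) =
    ∑ j : Fin (N + 1), if i ≤ (j : ℕ) then ιMulti ℝ (N + 1) (wG' (N + 1) i j σ) else 0 := by
  simp only [contract_ιMulti, Finset.mul_sum, mul_smul_comm]
  rw [Finset.sum_comm]
  refine Finset.sum_congr rfl fun j _ => ?_
  by_cases hj : (j : ℕ) < i
  · rw [if_neg (by omega)]
    refine Finset.sum_eq_zero fun q _ => ?_
    have hw : wG (N + 1) i σ j = cD (N + 1) (σ j) := if_pos hj
    rw [hw, eval_cD, mul_zero, zero_smul]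
  · rw [if_pos (by omega)]
    have hw : wG (N + 1) i σ j = nDual (N + 1) (σ j) := if_neg hj
    rw [Finset.sum_eq_single (σ j)]
    · rw [hw, eval_nD, if_pos rfl, mul_one]
      have hι : (CliffordAlgebra.ι (0 : QuadraticForm ℝ
            (Module.Dual ℝ (Fin ((N+1)+(N+1)) → ℝ)))) (cD (N + 1) (σ j))
          = ExteriorAlgebra.ι ℝ (cD (N + 1) (σ j)) := rfl
      rw [hι, ιMulti_cons]
      have hfun : Fin.cons (cD (N + 1) (σ j)) (wG (N + 1) i σ ∘ j.succAbove) =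
          wG' (N + 1) i j σ ∘ ⇑(j.cycleRange)⁻¹ := by
        funext k
        refine Fin.cases ?_ (fun m => ?_) k
        · have h0 : (j.cycleRange)⁻¹ (0 : Fin (N + 1)) = j := by
            simp [Equiv.Perm.inv_def]
          simp only [Function.comp_apply, Fin.cons_zero, h0, wG']
          simp
        · have hs : (j.cycleRange)⁻¹ m.succ = j.succAbove m := by
            simp [Equiv.Perm.inv_def]
          simp only [Function.comp_apply, Fin.cons_succ, hs, wG', wG]
          simp [Fin.succAbove_ne j m]
      rw [hfun, AlternatingMap.map_perm]
      rw [Units.smul_def, ← Int.cast_smul_eq_zsmul ℝ, smul_smul]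
      have hsgn : (((Equiv.Perm.sign (j.cycleRange)⁻¹ : ℤˣ) : ℤ) : ℝ) = (-1) ^ (j : ℕ) := by
        rw [Equiv.Perm.sign_inv, Fin.sign_cycleRange]
        push_cast
        ring
      rw [hsgn, ← mul_pow]
      norm_num
    · intro q _ hq
      rw [hw, eval_nD, if_neg (fun h => hq h.symm), mul_zero, zero_smul]
    · intro h
      exact absurd (Finset.mem_univ _) h

lemma lemB (n i : ℕ) (hi : i < n) (j : Fin n) (hj : i ≤ (j : ℕ)) :
    (∑ σ : Equiv.Perm (Fin n), (((Equiv.Perm.sign σ : ℤ) : ℝ)) • ιMulti ℝ n (wG' n i j σ)) =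
    ∑ τ : Equiv.Perm (Fin n), (((Equiv.Perm.sign τ : ℤ) : ℝ)) • ιMulti ℝ n (wG n (i + 1) τ) := by
  set ρ : Equiv.Perm (Fin n) := Equiv.swap ⟨i, hi⟩ j with hρ
  refine Fintype.sum_equiv (Equiv.mulRight ρ⁻¹) _ _ fun σ => ?_
  simp only [Equiv.coe_mulRight]
  have hw : wG' n i j σ = wG n (i + 1) (σ * ρ⁻¹) ∘ ⇑ρ := by
    funext k
    simp only [wG, wG', Function.comp_apply, Equiv.Perm.mul_apply, Equiv.Perm.coe_inv,
      Equiv.symm_apply_apply]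
    refine if_congr ?_ rfl rfl
    by_cases h1 : k = ⟨i, hi⟩
    · subst h1
      rw [hρ, Equiv.swap_apply_left]
      simp [Fin.ext_iff]
      omega
    · by_cases h2 : k = j
      · subst h2
        rw [hρ, Equiv.swap_apply_right]
        simp [Fin.ext_iff]
      · rw [hρ, Equiv.swap_apply_of_ne_of_ne h1 h2]
        simp [Fin.ext_iff] at h1 h2 ⊢
        omega
  rw [hw, AlternatingMap.map_perm]
  rw [Units.smul_def, ← Int.cast_smul_eq_zsmul ℝ, smul_smul]
  congr 1
  rw [map_mul, map_inv]
  rcases Int.units_eq_one_or (Equiv.Perm.sign ρ) with h | h <;>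
    rcases Int.units_eq_one_or (Equiv.Perm.sign σ) with h' | h' <;>
      rw [h, h'] <;> norm_num

lemma card_filter_le (n i : ℕ) (hi : i < n) :
    (Finset.univ.filter fun j : Fin n => i ≤ (j : ℕ)).card = n - i := by
  have h : (Finset.univ.filter fun j : Fin n => i ≤ (j : ℕ)) =
      Finset.Ici (⟨i, hi⟩ : Fin n) := by
    ext k
    simp [Fin.le_def]
  rw [h, Fin.card_Ici]

lemma fact_id (n i : ℕ) (h : i < n) :
    ((i.factorial * (n - i).factorial : ℝ))⁻¹ * ((n - i : ℕ) : ℝ) =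
    ((i : ℝ) + 1) * (((i + 1).factorial * (n - (i + 1)).factorial : ℝ))⁻¹ := by
  have h1 : n - i = (n - (i + 1)) + 1 := by omega
  rw [h1, Nat.factorial_succ, Nat.factorial_succ]
  have e1 : (0 : ℝ) < i.factorial := by exact_mod_cast Nat.factorial_pos i
  have e2 : (0 : ℝ) < (n - (i + 1)).factorial := by exact_mod_cast Nat.factorial_pos (n - (i + 1))
  push_cast
  field_simp

lemma key_lhs (n i : ℕ) :
    (∑ q : Fin n, eD (n + n) (Fin.castAdd n q) *
        iotaV (n + n) (Fin.natAdd n q) (alphaG n i)) =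
    ((i.factorial * (n - i).factorial : ℝ))⁻¹ •
      ∑ σ : Equiv.Perm (Fin n), (((Equiv.Perm.sign σ : ℤ) : ℝ)) •
        ∑ q : Fin n, ExteriorAlgebra.ι ℝ (cD n q) *
          CliffordAlgebra.contractLeft (Q := 0)
            (Module.Dual.eval ℝ (Fin (n + n) → ℝ) (Pi.single (Fin.natAdd n q) 1))
            (ιMulti ℝ n (wG n i σ)) := by
  have heD : ∀ q : Fin n, eD (n + n) (Fin.castAdd n q) = ExteriorAlgebra.ι ℝ (cD n q) :=
    fun q => rfl
  simp only [alphaG_eq, iotaV, map_smul, map_sum, heD, Finset.mul_sum, Finset.smul_sum,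
    mul_smul_comm, smul_smul]
  rw [Finset.sum_comm]

theorem stmt17 (n : ℕ) :
    (∀ i : ℕ, i < n →
      ∑ q : Fin n, eD (n + n) (Fin.castAdd n q) *
          iotaV (n + n) (Fin.natAdd n q) (alphaG n i) =
        ((i : ℝ) + 1) • alphaG n (i + 1)) ∧
    (∑ q : Fin n, eD (n + n) (Fin.castAdd n q) *
        iotaV (n + n) (Fin.natAdd n q) (alphaG n n) = 0) := by
  constructor
  · intro i hi
    obtain ⟨N, rfl⟩ : ∃ N, n = N + 1 := ⟨n - 1, by omega⟩
    rw [key_lhs (N + 1) i]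
    simp only [lemA N i]
    have hstep : ∀ j : Fin (N + 1),
        (∑ σ : Equiv.Perm (Fin (N + 1)), (((Equiv.Perm.sign σ : ℤ) : ℝ)) •
          (if i ≤ (j : ℕ) then ιMulti ℝ (N + 1) (wG' (N + 1) i j σ) else 0)) =
        if i ≤ (j : ℕ) then
          (∑ τ : Equiv.Perm (Fin (N + 1)),
            (((Equiv.Perm.sign τ : ℤ) : ℝ)) • ιMulti ℝ (N + 1) (wG (N + 1) (i + 1) τ))
        else 0 := by
      intro j
      by_cases hj : i ≤ (j : ℕ)
      · simp only [if_pos hj]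
        exact lemB (N + 1) i hi j hj
      · simp [if_neg hj]
    have hmain : (∑ σ : Equiv.Perm (Fin (N + 1)), (((Equiv.Perm.sign σ : ℤ) : ℝ)) •
        ∑ j : Fin (N + 1),
          (if i ≤ (j : ℕ) then ιMulti ℝ (N + 1) (wG' (N + 1) i j σ) else 0)) =
        ((N + 1 - i : ℕ)) • (∑ τ : Equiv.Perm (Fin (N + 1)),
          (((Equiv.Perm.sign τ : ℤ) : ℝ)) • ιMulti ℝ (N + 1) (wG (N + 1) (i + 1) τ)) := by
      simp only [Finset.smul_sum]
      rw [Finset.sum_comm]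
      simp only [hstep]
      rw [← Finset.sum_filter, Finset.sum_const, card_filter_le (N + 1) i hi]
      rw [Finset.smul_sum]
    rw [hmain]
    rw [← Nat.cast_smul_eq_nsmul ℝ, smul_smul]
    rw [alphaG_eq (N + 1) (i + 1), smul_smul]
    rw [fact_id (N + 1) i hi]
  · rcases n with _ | N
    · simp
    · rw [key_lhs (N + 1) (N + 1)]
      have hz : ∀ σ : Equiv.Perm (Fin (N + 1)),
          (∑ q : Fin (N + 1), ExteriorAlgebra.ι ℝ (cD (N + 1) q) *
            CliffordAlgebra.contractLeft (Q := 0)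
              (Module.Dual.eval ℝ (Fin ((N + 1) + (N + 1)) → ℝ)
                (Pi.single (Fin.natAdd (N + 1) q) 1))
              (ιMulti ℝ (N + 1) (wG (N + 1) (N + 1) σ))) = 0 := by
        intro σ
        rw [lemA N (N + 1) σ]
        refine Finset.sum_eq_zero fun j _ => ?_
        have := j.isLt
        rw [if_neg (by omega)]
      simp only [hz, smul_zero, Finset.sum_const_zero]
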